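/- The real number α defined as the largest real root of x³ - 6x² + 5x - 1 is a Pisot unit, and α = b² where b = 1/(2cos(3π/7)) is the Pisot number satisfying b³ - 2b² - b + 1 = 0. -/

import Mathlib

lemma int_cubic (a2 a1 a0 : ℤ) (x : ℝ)
    (hx : x ^ 3 + a2 * x ^ 2 + a1 * x + a0 = 0) : IsIntegral ℤ x := by
  refine ⟨Polynomial.X ^ 3 + Polynomial.C a2 * Polynomial.X ^ 2
      + Polynomial.C a1 * Polynomial.X + Polynomial.C a0, ?_, ?_⟩
  · monicity!
  · rw [← Polynomial.aeval_def]
    simp only [map_add, map_mul, map_pow, Polynomial.aeval_X, Polynomial.aeval_C, map_intCast, eq_intCast]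
    linear_combination hx

lemma quad_roots (p q : ℝ) (hD : 0 ≤ p ^ 2 - 4 * q) (z : ℂ)
    (hz : z ^ 2 + (p : ℂ) * z + (q : ℂ) = 0) :
    z = (((-p + Real.sqrt (p ^ 2 - 4 * q)) / 2 : ℝ) : ℂ) ∨
      z = (((-p - Real.sqrt (p ^ 2 - 4 * q)) / 2 : ℝ) : ℂ) := by
  set s := Real.sqrt (p ^ 2 - 4 * q) with hsdef
  have hs : s ^ 2 = p ^ 2 - 4 * q := Real.sq_sqrt hD
  have hs' : ((s : ℂ)) ^ 2 = (p : ℂ) ^ 2 - 4 * (q : ℂ) := by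
    have : ((s ^ 2 : ℝ) : ℂ) = ((p ^ 2 - 4 * q : ℝ) : ℂ) := by rw [hs]
    push_cast at this; exact this
  have key : (z - (((-p + s) / 2 : ℝ) : ℂ)) * (z - (((-p - s) / 2 : ℝ) : ℂ)) = 0 := by
    push_cast
    linear_combination hz - (1 / 4 : ℂ) * hs'
  rcases mul_eq_zero.1 key with h | h
  · exact Or.inl (sub_eq_zero.1 h)
  · exact Or.inr (sub_eq_zero.1 h)

noncomputable def b7 : ℝ := 1 / (2 * Real.cos (3 * Real.pi / 7))

lemma b7_cubic : b7 ^ 3 - 2 * b7 ^ 2 - b7 + 1 = 0 := by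
  have pi_pos := Real.pi_pos
  set c := Real.cos (3 * Real.pi / 7) with hc
  have hcpos : 0 < c := Real.cos_pos_of_mem_Ioo ⟨by nlinarith, by nlinarith⟩
  -- quartic identity
  have e1 : Real.cos (3 * Real.pi) = -1 := by
    rw [show (3 : ℝ) * Real.pi = Real.pi + 2 * Real.pi by ring, Real.cos_add_two_pi, Real.cos_pi]
  have e2 : Real.sin (3 * Real.pi) = 0 := by
    rw [show (3 : ℝ) * Real.pi = Real.pi + 2 * Real.pi by ring, Real.sin_add_two_pi, Real.sin_pi]
  have h4 : Real.cos (4 * (3 * Real.pi / 7)) = - Real.cos (3 * (3 * Real.pi / 7)) := by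
    rw [show 4 * (3 * Real.pi / 7) = 3 * Real.pi - 3 * (3 * Real.pi / 7) by ring,
      Real.cos_sub, e1, e2]
    ring
  have hx4 : Real.cos (4 * (3 * Real.pi / 7)) = 8 * c ^ 4 - 8 * c ^ 2 + 1 := by
    rw [show 4 * (3 * Real.pi / 7) = 2 * (2 * (3 * Real.pi / 7)) by ring,
      Real.cos_two_mul, Real.cos_two_mul]
    ring
  have hx3 : Real.cos (3 * (3 * Real.pi / 7)) = 4 * c ^ 3 - 3 * c := by
    rw [Real.cos_three_mul]
  have hq : 8 * c ^ 4 + 4 * c ^ 3 - 8 * c ^ 2 - 3 * c + 1 = 0 := by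
    rw [hx4, hx3] at h4; linarith
  have hcu : 8 * c ^ 3 - 4 * c ^ 2 - 4 * c + 1 = 0 := by
    have key : (c + 1) * (8 * c ^ 3 - 4 * c ^ 2 - 4 * c + 1) = 0 := by linear_combination hq
    rcases mul_eq_zero.1 key with h | h
    · nlinarith
    · exact h
  have hc0 : c ≠ 0 := ne_of_gt hcpos
  show (1 / (2 * c)) ^ 3 - 2 * (1 / (2 * c)) ^ 2 - (1 / (2 * c)) + 1 = 0
  field_simp
  linear_combination hcu

lemma b7_gt_one : 1 < b7 := by
  have pi_pos := Real.pi_pos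
  have hcpos : 0 < Real.cos (3 * Real.pi / 7) :=
    Real.cos_pos_of_mem_Ioo ⟨by nlinarith, by nlinarith⟩
  have hlt : Real.cos (3 * Real.pi / 7) < Real.cos (Real.pi / 3) := by
    apply Real.strictAntiOn_cos ⟨by positivity, by nlinarith⟩ ⟨by positivity, by nlinarith⟩
    nlinarith
  rw [Real.cos_pi_div_three] at hlt
  rw [b7]
  rw [lt_div_iff₀ (by positivity)]
  nlinarith

lemma b7_bounds : 2.24 < b7 ∧ b7 < 2.25 := by
  have h1 := b7_gt_one
  have h3 := b7_cubic
  constructor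
  · by_contra h
    push_neg at h
    nlinarith [sq_nonneg (b7 - 1.7), sq_nonneg (b7 - 1), sq_nonneg (b7 - 2.24), mul_pos (sub_pos.2 h1) (sub_pos.2 h1)]
  · by_contra h
    push_neg at h
    nlinarith [sq_nonneg (b7 - 2.25), mul_nonneg (sub_nonneg.2 h) (sub_nonneg.2 h)]

/-- The largest real root α of x³-6x²+5x-1 is a Pisot unit, and α = b² where
b = 1/(2cos(3π/7)) is the Pisot number satisfying b³-2b²-b+1 = 0. -/
theorem seven_fold_scaling_pisot_unit (α : ℝ)
    (hroot : α ^ 3 - 6 * α ^ 2 + 5 * α - 1 = 0)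
    (hmax : ∀ t : ℝ, t ^ 3 - 6 * t ^ 2 + 5 * t - 1 = 0 → t ≤ α) :
    IsIntegral ℤ α ∧ 1 < α ∧
    (∀ z : ℂ, z ^ 3 - 6 * z ^ 2 + 5 * z - 1 = 0 → z ≠ (α : ℂ) → ‖z‖ < 1) ∧
    (∃ u : ℝ, IsIntegral ℤ u ∧ α * u = 1) ∧
    α = b7 ^ 2 ∧
    b7 ^ 3 - 2 * b7 ^ 2 - b7 + 1 = 0 ∧ IsIntegral ℤ b7 ∧ 1 < b7 ∧
    (∀ z : ℂ, z ^ 3 - 2 * z ^ 2 - z + 1 = 0 → z ≠ (b7 : ℂ) → ‖z‖ < 1) := by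
  obtain ⟨hb1, hb2⟩ := b7_bounds
  have hbc := b7_cubic
  -- b7^2 is a root of the alpha-polynomial
  have hb2root : (b7 ^ 2) ^ 3 - 6 * (b7 ^ 2) ^ 2 + 5 * (b7 ^ 2) - 1 = 0 := by
    linear_combination (b7 ^ 3 + 2 * b7 ^ 2 - b7 - 1) * hbc
  -- bounds on alpha
  have hα_lb : b7 ^ 2 ≤ α := hmax _ hb2root
  have hα5 : 5 < α := by nlinarith
  have hα55 : α < 5.05 := by
    by_contra h
    push_neg at h
    nlinarith [mul_nonneg (sub_nonneg.2 h) (sub_nonneg.2 h), sq_nonneg (α - 5.05)]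
  -- alpha = b7^2
  have hαb : α = b7 ^ 2 := by
    have key : (α - b7 ^ 2) * (α ^ 2 + α * b7 ^ 2 + (b7 ^ 2) ^ 2 - 6 * α - 6 * b7 ^ 2 + 5) = 0 := by
      linear_combination hroot - hb2root
    have hqpos : 0 < α ^ 2 + α * b7 ^ 2 + (b7 ^ 2) ^ 2 - 6 * α - 6 * b7 ^ 2 + 5 := by nlinarith
    rcases mul_eq_zero.1 key with h | h
    · linarith [sub_eq_zero.1 h]
    · linarith
  refine ⟨?_, by linarith, ?_, ?_, hαb, hbc, ?_, b7_gt_one, ?_⟩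
  · exact int_cubic (-6) 5 (-1) α (by push_cast; linear_combination hroot)
  · -- conjugates of alpha
    intro z hz hzα
    have hαℂ : (α : ℂ) ^ 3 - 6 * (α : ℂ) ^ 2 + 5 * (α : ℂ) - 1 = 0 := by exact_mod_cast hroot
    have hfac : (z - (α : ℂ)) * (z ^ 2 + ((α - 6 : ℝ) : ℂ) * z + ((α ^ 2 - 6 * α + 5 : ℝ) : ℂ)) = 0 := by
      push_cast
      linear_combination hz - hαℂ
    have hquad : z ^ 2 + ((α - 6 : ℝ) : ℂ) * z + ((α ^ 2 - 6 * α + 5 : ℝ) : ℂ) = 0 := by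
      rcases mul_eq_zero.1 hfac with h | h
      · exact absurd (sub_eq_zero.1 h) hzα
      · exact h
    have hD : (0 : ℝ) ≤ (α - 6) ^ 2 - 4 * (α ^ 2 - 6 * α + 5) := by nlinarith
    have hs0 : 0 ≤ Real.sqrt ((α - 6) ^ 2 - 4 * (α ^ 2 - 6 * α + 5)) := Real.sqrt_nonneg _
    have hs1 : Real.sqrt ((α - 6) ^ 2 - 4 * (α ^ 2 - 6 * α + 5)) < α - 4 :=
      (Real.sqrt_lt' (by linarith)).2 (by nlinarith)
    have hs2 : Real.sqrt ((α - 6) ^ 2 - 4 * (α ^ 2 - 6 * α + 5)) < 8 - α :=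
      (Real.sqrt_lt' (by linarith)).2 (by nlinarith)
    rcases quad_roots (α - 6) (α ^ 2 - 6 * α + 5) hD z hquad with h | h <;>
        rw [h, Complex.norm_real, Real.norm_eq_abs, abs_lt] <;> constructor
    · linarith
    · linarith
    · linarith
    · linarith
  · -- unit
    refine ⟨α ^ 2 - 6 * α + 5, ?_, by linear_combination hroot⟩
    exact int_cubic (-5) 6 (-1) (α ^ 2 - 6 * α + 5)
      (by push_cast; linear_combination (α ^ 3 - 12 * α ^ 2 + 41 * α - 29) * hroot)
  · exact int_cubic (-2) (-1) 1 b7 (by push_cast; linear_combination hbc)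
  · -- conjugates of b7
    intro z hz hzb
    have hbℂ : (b7 : ℂ) ^ 3 - 2 * (b7 : ℂ) ^ 2 - (b7 : ℂ) + 1 = 0 := by exact_mod_cast hbc
    have hfac : (z - (b7 : ℂ)) * (z ^ 2 + ((b7 - 2 : ℝ) : ℂ) * z + ((b7 ^ 2 - 2 * b7 - 1 : ℝ) : ℂ)) = 0 := by
      push_cast
      linear_combination hz - hbℂ
    have hquad : z ^ 2 + ((b7 - 2 : ℝ) : ℂ) * z + ((b7 ^ 2 - 2 * b7 - 1 : ℝ) : ℂ) = 0 := by
      rcases mul_eq_zero.1 hfac with h | h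
      · exact absurd (sub_eq_zero.1 h) hzb
      · exact h
    have hD : (0 : ℝ) ≤ (b7 - 2) ^ 2 - 4 * (b7 ^ 2 - 2 * b7 - 1) := by nlinarith
    have hs0 : 0 ≤ Real.sqrt ((b7 - 2) ^ 2 - 4 * (b7 ^ 2 - 2 * b7 - 1)) := Real.sqrt_nonneg _
    have hs1 : Real.sqrt ((b7 - 2) ^ 2 - 4 * (b7 ^ 2 - 2 * b7 - 1)) < b7 :=
      (Real.sqrt_lt' (by linarith)).2 (by nlinarith)
    have hs2 : Real.sqrt ((b7 - 2) ^ 2 - 4 * (b7 ^ 2 - 2 * b7 - 1)) < 4 - b7 :=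
      (Real.sqrt_lt' (by linarith)).2 (by nlinarith)
    rcases quad_roots (b7 - 2) (b7 ^ 2 - 2 * b7 - 1) hD z hquad with h | h <;>
        rw [h, Complex.norm_real, Real.norm_eq_abs, abs_lt] <;> constructor
    · linarith
    · linarith
    · linarith
    · linarith
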